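/- Let 2 ≤ k, d ≤ n be integers and suppose the (k-1)-planes l₁,…,l_d ⊂ ℙⁿ are in special position with respect to (n-k)-planes of ℙⁿ. Then the dimension of their linear span Span(l₁,…,l_d) in ℙⁿ is at most ⌊kd/2⌋ − 1. -/

import Mathlib

open Module

section SpecialPositionAux

open Submodule


section Rado

variable {V : Type*} [AddCommGroup V] [Module ℂ V] [FiniteDimensional ℂ V]
variable {ι : Type*} [DecidableEq ι]

lemma finrank_sup_le'' (X Y : Submodule ℂ V) :
    finrank ℂ ↥(X ⊔ Y) ≤ finrank ℂ ↥X + finrank ℂ ↥Y := by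
  have := Submodule.finrank_sup_add_finrank_inf_eq X Y
  omega

lemma finrank_sup_finset_le' (B : Submodule ℂ V) (T : Finset ι) (M : ι → Submodule ℂ V) :
    finrank ℂ ↥(B ⊔ T.sup M) ≤ finrank ℂ ↥B + ∑ j ∈ T, finrank ℂ ↥(M j) := by
  classical
  induction T using Finset.induction_on with
  | empty =>
      rw [Finset.sup_empty, sup_bot_eq]
      simp
  | insert a P' ha ih =>
      rw [Finset.sup_insert, Finset.sum_insert ha]
      have h1 : B ⊔ (M a ⊔ P'.sup M) = (B ⊔ P'.sup M) ⊔ M a := by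
        rw [sup_comm (M a) (P'.sup M), sup_assoc]
      rw [h1]
      calc finrank ℂ ↥((B ⊔ P'.sup M) ⊔ M a)
          ≤ finrank ℂ ↥(B ⊔ P'.sup M) + finrank ℂ ↥(M a) := finrank_sup_le'' _ _
        _ ≤ (finrank ℂ ↥B + ∑ j ∈ P', finrank ℂ ↥(M j)) + finrank ℂ ↥(M a) := by
            exact Nat.add_le_add_right ih _
        _ = finrank ℂ ↥B + (finrank ℂ ↥(M a) + ∑ j ∈ P', finrank ℂ ↥(M j)) := by ring

lemma exists_two_hyperplanes (M : Submodule ℂ V) (h2 : 2 ≤ finrank ℂ ↥M) :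
    ∃ H₁ H₂ : Submodule ℂ V, H₁ ≤ M ∧ H₂ ≤ M ∧
      finrank ℂ ↥H₁ + 1 = finrank ℂ ↥M ∧ finrank ℂ ↥H₂ + 1 = finrank ℂ ↥M ∧
      H₁ ⊔ H₂ = M := by
  classical
  set r := finrank ℂ ↥M with hr
  let b : Basis (Fin r) ℂ ↥M := Module.finBasis ℂ ↥M
  let c : Fin r → V := fun t => ((b t : ↥M) : V)
  have lic : LinearIndependent ℂ c := b.linearIndependent.map' M.subtype M.ker_subtype
  have hcM : ∀ t, c t ∈ M := fun t => (b t).2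
  have hspan : span ℂ (Set.range c) = M := by
    have h1 : span ℂ (Set.range (fun t => (b t : ↥M))) = (⊤ : Submodule ℂ ↥M) := b.span_eq
    have h2' : span ℂ (M.subtype '' (Set.range fun t => (b t))) = Submodule.map M.subtype ⊤ := by
      rw [← Submodule.map_span, h1]
    have h3 : M.subtype '' (Set.range fun t => (b t)) = Set.range c := by
      rw [← Set.range_comp]; rfl
    rw [h3] at h2'
    rw [h2', Submodule.map_subtype_top]
  have key : ∀ t₀ : Fin r, ∃ H : Submodule ℂ V, H ≤ M ∧ finrank ℂ ↥H + 1 = r ∧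
      ∀ t : Fin r, t ≠ t₀ → c t ∈ H := by
    intro t₀
    refine ⟨span ℂ (Set.range (fun s : {s : Fin r // s ≠ t₀} => c s.1)), ?_, ?_, ?_⟩
    · rw [Submodule.span_le]
      rintro x ⟨s, rfl⟩
      exact hcM s.1
    · have lis : LinearIndependent ℂ (fun s : {s : Fin r // s ≠ t₀} => c s.1) :=
        lic.comp Subtype.val Subtype.val_injective
      rw [finrank_span_eq_card lis]
      have hcard : Fintype.card {s : Fin r // s ≠ t₀} = r - 1 := by
        have := Fintype.card_subtype_compl (fun s : Fin r => s = t₀)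
        simp only [Fintype.card_subtype_eq, Fintype.card_fin] at this
        convert this using 2
      rw [hcard]
      omega
    · intro t ht
      exact Submodule.subset_span ⟨⟨t, ht⟩, rfl⟩
  have hr2 : 0 < r ∧ 1 < r := by omega
  let z : Fin r := ⟨0, hr2.1⟩
  let o : Fin r := ⟨1, hr2.2⟩
  have h01 : z ≠ o := by
    intro h
    have := congrArg Fin.val h
    simp [z, o] at this
  obtain ⟨H₁, hH₁M, hH₁r, hH₁mem⟩ := key z
  obtain ⟨H₂, hH₂M, hH₂r, hH₂mem⟩ := key o
  refine ⟨H₁, H₂, hH₁M, hH₂M, hH₁r, hH₂r, ?_⟩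
  apply le_antisymm (sup_le hH₁M hH₂M)
  rw [← hspan, Submodule.span_le]
  rintro x ⟨t, rfl⟩
  by_cases ht : t = z
  · subst ht
    exact Submodule.mem_sup_right (hH₂mem z h01)
  · exact Submodule.mem_sup_left (hH₁mem t ht)

/-- Rado's theorem for subspaces, relative to a base submodule `B`. -/
lemma rado_aux (B : Submodule ℂ V) (T : Finset ι) :
    ∀ (N : ℕ) (M : ι → Submodule ℂ V),
    (∑ j ∈ T, finrank ℂ ↥(M j)) ≤ N →
    (∀ T' ⊆ T, T'.Nonempty → finrank ℂ ↥B + T'.card ≤ finrank ℂ ↥(B ⊔ T'.sup M)) →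
    ∃ u : ι → V, (∀ j ∈ T, u j ∈ M j) ∧
      ∀ a : ι → ℂ, (∑ j ∈ T, a j • u j) ∈ B → ∀ j ∈ T, a j = 0 := by
  classical
  intro N
  induction N with
  | zero =>
      intro M hsum hall
      rcases T.eq_empty_or_nonempty with hT | hT
      · subst hT
        exact ⟨0, by simp, by simp⟩
      · obtain ⟨j, hj⟩ := hT
        exfalso
        have h1 : finrank ℂ ↥B + 1 ≤ finrank ℂ ↥(B ⊔ ({j} : Finset ι).sup M) := by
          have := hall {j} (by simpa using hj) ⟨j, Finset.mem_singleton_self j⟩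
          simpa using this
        have h2 : finrank ℂ ↥(M j) = 0 := by
          have : finrank ℂ ↥(M j) ≤ ∑ t ∈ T, finrank ℂ ↥(M t) :=
            Finset.single_le_sum (f := fun t => finrank ℂ ↥(M t)) (fun t _ => Nat.zero_le _) hj
          omega
        have h3 : finrank ℂ ↥(B ⊔ ({j} : Finset ι).sup M) ≤ finrank ℂ ↥B := by
          rw [Finset.sup_singleton]
          calc finrank ℂ ↥(B ⊔ M j) ≤ finrank ℂ ↥B + finrank ℂ ↥(M j) := finrank_sup_le'' _ _
            _ = finrank ℂ ↥B := by omega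
        omega
  | succ N ih =>
      intro M hsum hall
      by_cases hsmall : ∀ j ∈ T, finrank ℂ ↥(M j) ≤ 1
      · -- base case: all ranks equal 1
        have hrank1 : ∀ j ∈ T, finrank ℂ ↥(M j) = 1 := by
          intro j hj
          have h1 : finrank ℂ ↥B + 1 ≤ finrank ℂ ↥(B ⊔ M j) := by
            have h := hall {j} (by simpa using hj) ⟨j, Finset.mem_singleton_self j⟩
            rw [Finset.sup_singleton] at h
            simpa using h
          have h2 : finrank ℂ ↥(B ⊔ M j) ≤ finrank ℂ ↥B + finrank ℂ ↥(M j) :=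
            finrank_sup_le'' _ _
          have := hsmall j hj
          omega
        -- choose a nonzero vector in each M j
        have hch : ∀ j : ι, ∃ x : V, j ∈ T → (x ∈ M j ∧ x ≠ 0) := by
          intro j
          by_cases hj : j ∈ T
          · have hne : M j ≠ ⊥ := by
              intro hbot
              have := hrank1 j hj
              rw [hbot] at this
              simp at this
            obtain ⟨x, hx, hx0⟩ := Submodule.exists_mem_ne_zero_of_ne_bot hne
            exact ⟨x, fun _ => ⟨hx, hx0⟩⟩
          · exact ⟨0, fun h => absurd h hj⟩
        choose u hu using hch
        refine ⟨u, fun j hj => (hu j hj).1, ?_⟩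
        intro a ha j hj
        by_contra haj
        -- M j = span of u j, and u j ∈ B ⊔ (T.erase j).sup M
        have hMj : M j = span ℂ {u j} := by
          have hle : span ℂ {u j} ≤ M j := by
            rw [Submodule.span_singleton_le_iff_mem]
            exact (hu j hj).1
          have hfr : finrank ℂ ↥(M j) ≤ finrank ℂ ↥(span ℂ {u j}) := by
            rw [finrank_span_singleton (hu j hj).2, hrank1 j hj]
          exact (Submodule.eq_of_le_of_finrank_le hle hfr).symm
        have hsum_split : ∑ t ∈ T, a t • u t = a j • u j + ∑ t ∈ T.erase j, a t • u t := by
          rw [← Finset.add_sum_erase T _ hj]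
        have herase_mem : ∑ t ∈ T.erase j, a t • u t ∈ (T.erase j).sup M := by
          apply Submodule.sum_mem
          intro t ht
          have hle : M t ≤ (T.erase j).sup M := Finset.le_sup ht
          exact Submodule.smul_mem _ _ (hle (hu t (Finset.mem_of_mem_erase ht)).1)
        have huj : u j ∈ B ⊔ (T.erase j).sup M := by
          have h1 : a j • u j = (∑ t ∈ T, a t • u t) - ∑ t ∈ T.erase j, a t • u t := by
            rw [hsum_split]; abel
          have h2 : a j • u j ∈ B ⊔ (T.erase j).sup M := by
            rw [h1]
            exact Submodule.sub_mem _ (Submodule.mem_sup_left ha)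
              (Submodule.mem_sup_right herase_mem)
          have h3 : u j = (a j)⁻¹ • (a j • u j) := by
            rw [smul_smul, inv_mul_cancel₀ haj, one_smul]
          rw [h3]
          exact Submodule.smul_mem _ _ h2
        have hTle : T.sup M ≤ B ⊔ (T.erase j).sup M := by
          apply Finset.sup_le
          intro t ht
          by_cases htj : t = j
          · subst htj
            rw [hMj, Submodule.span_singleton_le_iff_mem]
            exact huj
          · exact le_trans (Finset.le_sup (Finset.mem_erase.mpr ⟨htj, ht⟩)) le_sup_right
        have hbig : finrank ℂ ↥B + T.card ≤ finrank ℂ ↥(B ⊔ T.sup M) :=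
          hall T (le_refl T) ⟨j, hj⟩
        have hsmall2 : finrank ℂ ↥(B ⊔ T.sup M) ≤ finrank ℂ ↥B + (T.card - 1) := by
          calc finrank ℂ ↥(B ⊔ T.sup M) ≤ finrank ℂ ↥(B ⊔ (B ⊔ (T.erase j).sup M)) := by
                apply Submodule.finrank_mono
                exact sup_le le_sup_left (hTle.trans le_sup_right)
            _ = finrank ℂ ↥(B ⊔ (T.erase j).sup M) := by rw [← sup_assoc, sup_idem]
            _ ≤ finrank ℂ ↥B + ∑ t ∈ T.erase j, finrank ℂ ↥(M t) := finrank_sup_finset_le' _ _ _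
            _ = finrank ℂ ↥B + ∑ t ∈ T.erase j, 1 := by
                congr 1
                apply Finset.sum_congr rfl
                intro t ht
                exact hrank1 t (Finset.mem_of_mem_erase ht)
            _ = finrank ℂ ↥B + (T.card - 1) := by
                rw [Finset.sum_const, smul_eq_mul, mul_one, Finset.card_erase_of_mem hj]
        have hcard : 1 ≤ T.card := Finset.card_pos.mpr ⟨j, hj⟩
        omega
      · -- inductive step: shrink some M j₀ with rank ≥ 2 to a hyperplane
        push_neg at hsmall
        obtain ⟨j₀, hj₀T, hj₀big⟩ := hsmall
        have hj₀2 : 2 ≤ finrank ℂ ↥(M j₀) := hj₀big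
        -- there is a hyperplane preserving the Hall condition
        have hexH : ∃ H : Submodule ℂ V, H ≤ M j₀ ∧ finrank ℂ ↥H + 1 = finrank ℂ ↥(M j₀) ∧
            (∀ T' ⊆ T, T'.Nonempty →
              finrank ℂ ↥B + T'.card ≤ finrank ℂ ↥(B ⊔ T'.sup (Function.update M j₀ H))) := by
          by_contra hno
          push_neg at hno
          obtain ⟨H₁, H₂, hH₁M, hH₂M, hH₁r, hH₂r, hHsup⟩ := exists_two_hyperplanes (M j₀) hj₀2
          -- extract violating sets
          have hviol : ∀ H : Submodule ℂ V, H ≤ M j₀ → finrank ℂ ↥H + 1 = finrank ℂ ↥(M j₀) →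
              ∃ T₁ ⊆ T.erase j₀,
                finrank ℂ ↥(B ⊔ (H ⊔ T₁.sup M)) < finrank ℂ ↥B + (T₁.card + 1) := by
            intro H hHM hHr
            obtain ⟨T', hT'T, hT'ne, hT'lt⟩ := hno H hHM hHr
            have hj₀T' : j₀ ∈ T' := by
              by_contra hj₀T'
              have : T'.sup (Function.update M j₀ H) = T'.sup M := by
                apply Finset.sup_congr rfl
                intro t ht
                refine Function.update_of_ne ?_ _ _
                intro h
                exact hj₀T' (h ▸ ht)
              rw [this] at hT'lt
              exact absurd (hall T' hT'T hT'ne) (not_le.mpr hT'lt)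
            refine ⟨T'.erase j₀, ?_, ?_⟩
            · intro t ht
              rw [Finset.mem_erase] at ht ⊢
              exact ⟨ht.1, hT'T ht.2⟩
            · have hT'eq : T' = insert j₀ (T'.erase j₀) := (Finset.insert_erase hj₀T').symm
              have hsup_eq : T'.sup (Function.update M j₀ H) = H ⊔ (T'.erase j₀).sup M := by
                conv_lhs => rw [hT'eq]
                rw [Finset.sup_insert]
                congr 1
                · exact Function.update_self _ _ _
                · apply Finset.sup_congr rfl
                  intro t ht
                  exact Function.update_of_ne (Finset.ne_of_mem_erase ht) _ _
              have hcard_eq : T'.card = (T'.erase j₀).card + 1 := by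
                rw [Finset.card_erase_of_mem hj₀T']
                have : 1 ≤ T'.card := Finset.card_pos.mpr ⟨j₀, hj₀T'⟩
                omega
              rw [hsup_eq, hcard_eq] at hT'lt
              exact hT'lt
          obtain ⟨T₁, hT₁, hT₁lt⟩ := hviol H₁ hH₁M hH₁r
          obtain ⟨T₂, hT₂, hT₂lt⟩ := hviol H₂ hH₂M hH₂r
          -- the submodular contradiction
          set X := B ⊔ (H₁ ⊔ T₁.sup M) with hX
          set Y := B ⊔ (H₂ ⊔ T₂.sup M) with hY
          have hXY_sup : X ⊔ Y = B ⊔ ((insert j₀ (T₁ ∪ T₂)).sup M) := by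
            rw [hX, hY, Finset.sup_insert, Finset.sup_union]
            rw [← hHsup]
            -- both sides are sups of the same pieces
            rw [sup_sup_sup_comm, sup_idem]
            rw [sup_sup_sup_comm]
          have hXY_inf : B ⊔ ((T₁ ∩ T₂).sup M) ≤ X ⊓ Y := by
            apply le_inf
            · exact sup_le_sup le_rfl (le_trans (Finset.sup_mono Finset.inter_subset_left) le_sup_right)
            · exact sup_le_sup le_rfl (le_trans (Finset.sup_mono Finset.inter_subset_right) le_sup_right)
          have hins_sub : insert j₀ (T₁ ∪ T₂) ⊆ T := by
            intro t ht
            rcases Finset.mem_insert.mp ht with h | h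
            · exact h ▸ hj₀T
            · rcases Finset.mem_union.mp h with h' | h'
              · exact Finset.mem_of_mem_erase (hT₁ h')
              · exact Finset.mem_of_mem_erase (hT₂ h')
          have hj₀notin : j₀ ∉ T₁ ∪ T₂ := by
            intro h
            rcases Finset.mem_union.mp h with h' | h'
            · exact (Finset.mem_erase.mp (hT₁ h')).1 rfl
            · exact (Finset.mem_erase.mp (hT₂ h')).1 rfl
          have h_sup_big : finrank ℂ ↥B + ((T₁ ∪ T₂).card + 1) ≤ finrank ℂ ↥(X ⊔ Y) := by
            rw [hXY_sup]
            have := hall (insert j₀ (T₁ ∪ T₂)) hins_sub ⟨j₀, Finset.mem_insert_self _ _⟩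
            rwa [Finset.card_insert_of_notMem hj₀notin] at this
          have h_inf_big : finrank ℂ ↥B + (T₁ ∩ T₂).card ≤ finrank ℂ ↥(X ⊓ Y) := by
            rcases (T₁ ∩ T₂).eq_empty_or_nonempty with he | hne
            · rw [he]
              simp only [Finset.card_empty, Nat.add_zero]
              apply Submodule.finrank_mono
              refine le_trans ?_ hXY_inf
              rw [he]
              rw [Finset.sup_empty, sup_bot_eq]
            · calc finrank ℂ ↥B + (T₁ ∩ T₂).card
                  ≤ finrank ℂ ↥(B ⊔ (T₁ ∩ T₂).sup M) := by
                    apply hall _ _ hne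
                    intro t ht
                    exact Finset.mem_of_mem_erase (hT₁ (Finset.mem_of_mem_inter_left ht))
                _ ≤ finrank ℂ ↥(X ⊓ Y) := Submodule.finrank_mono hXY_inf
          have hmodular : finrank ℂ ↥(X ⊔ Y) + finrank ℂ ↥(X ⊓ Y) =
              finrank ℂ ↥X + finrank ℂ ↥Y := Submodule.finrank_sup_add_finrank_inf_eq X Y
          have hcards : (T₁ ∪ T₂).card + (T₁ ∩ T₂).card = T₁.card + T₂.card :=
            Finset.card_union_add_card_inter T₁ T₂
          omega
        obtain ⟨H, hHM, hHr, hHall⟩ := hexH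
        have hsum' : (∑ j ∈ T, finrank ℂ ↥(Function.update M j₀ H j)) ≤ N := by
          have e1 : ∑ j ∈ T, finrank ℂ ↥(Function.update M j₀ H j)
              = finrank ℂ ↥H + ∑ j ∈ T.erase j₀, finrank ℂ ↥(Function.update M j₀ H j) := by
            rw [← Finset.add_sum_erase T _ hj₀T, Function.update_self]
          have e2 : ∑ j ∈ T.erase j₀, finrank ℂ ↥(Function.update M j₀ H j)
              = ∑ j ∈ T.erase j₀, finrank ℂ ↥(M j) := by
            apply Finset.sum_congr rfl
            intro t ht
            rw [Function.update_of_ne (Finset.ne_of_mem_erase ht)]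
          have e3 : ∑ j ∈ T, finrank ℂ ↥(M j)
              = finrank ℂ ↥(M j₀) + ∑ j ∈ T.erase j₀, finrank ℂ ↥(M j) := by
            rw [← Finset.add_sum_erase T _ hj₀T]
          omega
        obtain ⟨u, hu_mem, hu_ind⟩ := ih (Function.update M j₀ H) hsum' hHall
        refine ⟨u, ?_, hu_ind⟩
        intro j hj
        by_cases hjj : j = j₀
        · subst hjj
          have := hu_mem j hj
          rw [Function.update_self] at this
          exact hHM this
        · have := hu_mem j hj
          rwa [Function.update_of_ne hjj] at this

lemma rado (B : Submodule ℂ V) (T : Finset ι) (M : ι → Submodule ℂ V)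
    (hall : ∀ T' ⊆ T, T'.Nonempty → finrank ℂ ↥B + T'.card ≤ finrank ℂ ↥(B ⊔ T'.sup M)) :
    ∃ u : ι → V, (∀ j ∈ T, u j ∈ M j) ∧
      ∀ a : ι → ℂ, (∑ j ∈ T, a j • u j) ∈ B → ∀ j ∈ T, a j = 0 :=
  rado_aux B T (∑ j ∈ T, finrank ℂ ↥(M j)) M (le_refl _) hall

end Rado


section Greedy

variable {V : Type*} [AddCommGroup V] [Module ℂ V] [FiniteDimensional ℂ V]
variable {ι : Type*} [DecidableEq ι]

/-- Greedy avoidance: if every member has rank bigger than `E`, one can pick a nonzero vector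
in each member whose joint span misses `E`. -/
lemma greedy_avoid (E : Submodule ℂ V) (M : ι → Submodule ℂ V) (P : Finset ι)
    (h : ∀ b ∈ P, finrank ℂ ↥E < finrank ℂ ↥(M b)) :
    ∃ (C : Submodule ℂ V) (w : ι → V), C ≤ P.sup M ∧ C ⊓ E = ⊥ ∧
      ∀ b ∈ P, w b ∈ M b ∧ w b ≠ 0 ∧ w b ∈ C := by
  classical
  induction P using Finset.induction_on with
  | empty =>
      refine ⟨⊥, 0, le_rfl.trans (by rw [Finset.sup_empty]), bot_inf_eq E, by simp⟩
  | insert a P' ha ih =>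
      obtain ⟨C, w, hCsup, hCE, hw⟩ := ih (fun b hb => h b (Finset.mem_insert_of_mem hb))
      have hCsup' : C ≤ (insert a P').sup M :=
        hCsup.trans (Finset.sup_mono (Finset.subset_insert a P'))
      by_cases h1 : C ⊓ M a = ⊥
      · by_cases h2 : M a ≤ E ⊔ C
        · exfalso
          have e1 : finrank ℂ ↥(M a ⊔ C) + finrank ℂ ↥(M a ⊓ C)
              = finrank ℂ ↥(M a) + finrank ℂ ↥C := Submodule.finrank_sup_add_finrank_inf_eq _ _
          have e2 : M a ⊓ C = ⊥ := by rw [inf_comm]; exact h1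
          have e3 : finrank ℂ ↥(M a ⊔ C) ≤ finrank ℂ ↥(E ⊔ C) :=
            Submodule.finrank_mono (sup_le h2 le_sup_right)
          have e4 : finrank ℂ ↥(E ⊔ C) + finrank ℂ ↥(E ⊓ C)
              = finrank ℂ ↥E + finrank ℂ ↥C := Submodule.finrank_sup_add_finrank_inf_eq _ _
          have e5 : E ⊓ C = ⊥ := by rw [inf_comm]; exact hCE
          have e6 := h a (Finset.mem_insert_self a P')
          rw [e2] at e1
          rw [e5] at e4
          simp only [finrank_bot] at e1 e4
          omega
        · obtain ⟨x, hxMa, hxnot⟩ := SetLike.not_le_iff_exists.mp h2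
          refine ⟨C ⊔ ℂ ∙ x, Function.update w a x, ?_, ?_, ?_⟩
          · apply sup_le hCsup'
            rw [Submodule.span_singleton_le_iff_mem]
            have : M a ≤ (insert a P').sup M := Finset.le_sup (Finset.mem_insert_self a P')
            exact this hxMa
          · rw [eq_bot_iff]
            rintro y ⟨hy1, hy2⟩
            obtain ⟨cp, hcp, z, hz, rfl⟩ := Submodule.mem_sup.mp hy1
            obtain ⟨t, rfl⟩ := Submodule.mem_span_singleton.mp hz
            by_cases ht : t = 0
            · subst ht
              rw [zero_smul, add_zero] at hy2 ⊢
              have hmem : cp ∈ C ⊓ E := ⟨hcp, hy2⟩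
              rw [hCE] at hmem
              exact hmem
            · exfalso
              apply hxnot
              have hx_eq : x = t⁻¹ • ((cp + t • x) - cp) := by
                rw [add_sub_cancel_left, smul_smul, inv_mul_cancel₀ ht, one_smul]
              rw [hx_eq]
              apply Submodule.smul_mem
              apply Submodule.sub_mem
              · exact Submodule.mem_sup_left hy2
              · exact Submodule.mem_sup_right hcp
          · intro b hb
            rcases Finset.mem_insert.mp hb with rfl | hb'
            · rw [Function.update_self]
              refine ⟨hxMa, ?_, Submodule.mem_sup_right (Submodule.mem_span_singleton_self x)⟩
              intro h0
              subst h0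
              exact hxnot (Submodule.zero_mem _)
            · have hba : b ≠ a := fun h => ha (h ▸ hb')
              rw [Function.update_of_ne hba]
              obtain ⟨m1, m2, m3⟩ := hw b hb'
              exact ⟨m1, m2, Submodule.mem_sup_left m3⟩
      · obtain ⟨x, hx, hx0⟩ := Submodule.exists_mem_ne_zero_of_ne_bot h1
        refine ⟨C, Function.update w a x, hCsup', hCE, ?_⟩
        intro b hb
        rcases Finset.mem_insert.mp hb with rfl | hb'
        · rw [Function.update_self]
          exact ⟨hx.2, hx0, hx.1⟩
        · have hba : b ≠ a := fun h => ha (h ▸ hb')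
          rw [Function.update_of_ne hba]
          exact hw b hb'

end Greedy


section MainBound

variable {V : Type*} [AddCommGroup V] [Module ℂ V] [FiniteDimensional ℂ V]

/-- Core bound: if no subspace of the span avoids one member while meeting all others,
then twice the rank of the span is at most `k * d`. -/
lemma special_position_core {d k : ℕ} (hk : 2 ≤ k)
    (l : Fin d → Submodule ℂ V) (hl : ∀ i, finrank ℂ ↥(l i) = k)
    (hD : ∀ i : Fin d, ∀ S : Submodule ℂ V, S ≤ (⨆ j, l j) → S ⊓ l i = ⊥ →
      (∀ j, j ≠ i → l j ⊓ S ≠ ⊥) → False) :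
    2 * finrank ℂ ↥(⨆ i, l i) ≤ k * d := by
  classical
  set W : Submodule ℂ V := ⨆ i, l i with hW
  have hlW : ∀ j, l j ≤ W := fun j => le_iSup l j
  set PP : Submodule ℂ V → Finset (Fin d) :=
    fun A => Finset.univ.filter (fun j => l j ≤ A) with hPP
  set η : Submodule ℂ V → ℤ :=
    fun A => 2 * (finrank ℂ ↥A : ℤ) - k * ((PP A).card : ℤ) with hη
  have hPPcard : ∀ A, (PP A).card ≤ d := by
    intro A
    calc (PP A).card ≤ Finset.univ.card := Finset.card_filter_le _ _
      _ = d := by simp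
  have Hbdd : ∃ b : ℤ, ∀ z : ℤ, (∃ A, A ≤ W ∧ η A = z) → b ≤ z := by
    refine ⟨-((k : ℤ) * d), ?_⟩
    rintro z ⟨A, _, rfl⟩
    have h1 : ((PP A).card : ℤ) ≤ (d : ℤ) := by exact_mod_cast hPPcard A
    have h2 : (k : ℤ) * ((PP A).card : ℤ) ≤ (k : ℤ) * d :=
      mul_le_mul_of_nonneg_left h1 (by positivity)
    have h3 : (0 : ℤ) ≤ 2 * (finrank ℂ ↥A : ℤ) := by positivity
    simp only [hη]
    linarith
  obtain ⟨qs, ⟨A₀, hA₀W, hA₀q⟩, hmin⟩ :=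
    Int.exists_least_of_bdd Hbdd ⟨η ⊥, ⊥, bot_le, rfl⟩
  set Pm : ℕ → Prop := fun m => ∃ A, A ≤ W ∧ η A = qs ∧ finrank ℂ ↥A = m with hPm_def
  have hrankW : ∀ A : Submodule ℂ V, A ≤ W → finrank ℂ ↥A ≤ finrank ℂ ↥W :=
    fun A hA => Submodule.finrank_mono hA
  have hPm : Pm (Nat.findGreatest Pm (finrank ℂ ↥W)) :=
    Nat.findGreatest_spec (m := finrank ℂ ↥A₀) (hrankW A₀ hA₀W) ⟨A₀, hA₀W, hA₀q, rfl⟩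
  obtain ⟨As, hAsW, hAsq, hAsrank⟩ := hPm
  -- strict increase of η on proper extensions of As
  have hstrict : ∀ A : Submodule ℂ V, A ≤ W → As < A → η As + 1 ≤ η A := by
    intro A hAW hlt
    have h1 : qs ≤ η A := hmin _ ⟨A, hAW, rfl⟩
    rcases eq_or_lt_of_le h1 with he | hlt2
    · exfalso
      have h2 : finrank ℂ ↥A ≤ Nat.findGreatest Pm (finrank ℂ ↥W) :=
        Nat.le_findGreatest (hrankW A hAW) ⟨A, hAW, he.symm, rfl⟩
      have h3 : finrank ℂ ↥As < finrank ℂ ↥A := Submodule.finrank_lt_finrank_of_lt hlt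
      omega
    · rw [hAsq]; omega
  -- spread inequality
  have hspread : ∀ X : Finset (Fin d), X.Nonempty → (∀ j ∈ X, ¬ l j ≤ As) →
      k * X.card + 1 + 2 * finrank ℂ ↥As ≤ 2 * finrank ℂ ↥(As ⊔ X.sup l) := by
    intro X hXne hXout
    have hA'W : As ⊔ X.sup l ≤ W := sup_le hAsW (Finset.sup_le fun j _ => hlW j)
    have hlt : As < As ⊔ X.sup l := by
      apply lt_of_le_of_ne le_sup_left
      intro he
      obtain ⟨j, hj⟩ := hXne
      apply hXout j hj
      calc l j ≤ X.sup l := Finset.le_sup hj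
        _ ≤ As ⊔ X.sup l := le_sup_right
        _ = As := he.symm
    have hηineq := hstrict _ hA'W hlt
    have hsub : PP As ∪ X ⊆ PP (As ⊔ X.sup l) := by
      intro j hj
      rcases Finset.mem_union.mp hj with hj | hj
      · simp only [hPP, Finset.mem_filter] at hj ⊢
        exact ⟨hj.1, hj.2.trans le_sup_left⟩
      · simp only [hPP, Finset.mem_filter]
        exact ⟨Finset.mem_univ j, (Finset.le_sup hj).trans le_sup_right⟩
    have hdisj : Disjoint (PP As) X := by
      rw [Finset.disjoint_left]
      intro j hj hjX
      exact hXout j hjX (Finset.mem_filter.mp hj).2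
    have hcard : (PP As).card + X.card ≤ (PP (As ⊔ X.sup l)).card := by
      rw [← Finset.card_union_of_disjoint hdisj]
      exact Finset.card_le_card hsub
    -- unfold η in hηineq
    simp only [hη] at hηineq
    have hcard' : ((PP As).card : ℤ) + (X.card : ℤ) ≤ ((PP (As ⊔ X.sup l)).card : ℤ) := by
      exact_mod_cast hcard
    have hkpos : (0 : ℤ) ≤ (k : ℤ) := by positivity
    have hmul : (k : ℤ) * (((PP As).card : ℤ) + (X.card : ℤ))
        ≤ (k : ℤ) * ((PP (As ⊔ X.sup l)).card : ℤ) := mul_le_mul_of_nonneg_left hcard' hkpos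
    have goal_int : (k : ℤ) * X.card + 1 + 2 * (finrank ℂ ↥As : ℤ)
        ≤ 2 * (finrank ℂ ↥(As ⊔ X.sup l) : ℤ) := by
      nlinarith [hηineq, hmul]
    exact_mod_cast goal_int
  -- Now: every l j must lie in As
  set R : Finset (Fin d) := Finset.univ.filter (fun j => ¬ l j ≤ As) with hR
  rcases R.eq_empty_or_nonempty with hRe | hRne
  · -- all members in As ⇒ conclusion
    have hallin : ∀ j, l j ≤ As := by
      intro j
      by_contra hcon
      have hjR : j ∈ R := by
        simp only [hR, Finset.mem_filter]
        exact ⟨Finset.mem_univ j, hcon⟩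
      rw [hRe] at hjR
      simp at hjR
    have hWAs : W = As := le_antisymm (iSup_le hallin) hAsW
    have hbotPP : PP (⊥ : Submodule ℂ V) = ∅ := by
      rw [Finset.filter_eq_empty_iff]
      intro j _
      intro hle
      rw [le_bot_iff] at hle
      have := hl j
      rw [hle] at this
      simp only [finrank_bot] at this
      omega
    have hηbot : η ⊥ = 0 := by
      simp only [hη, hbotPP]
      simp
    have hqs0 : qs ≤ 0 := by
      have h := hmin (η ⊥) ⟨⊥, bot_le, rfl⟩
      rw [hηbot] at h
      exact h
    have hfin : 2 * (finrank ℂ ↥As : ℤ) ≤ (k : ℤ) * ((PP As).card : ℤ) := by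
      have : η As ≤ 0 := by rw [hAsq]; exact hqs0
      simp only [hη] at this
      linarith
    have hPPd : ((PP As).card : ℤ) ≤ (d : ℤ) := by exact_mod_cast hPPcard As
    have hfinal : 2 * (finrank ℂ ↥As : ℤ) ≤ (k : ℤ) * (d : ℤ) := by
      calc 2 * (finrank ℂ ↥As : ℤ) ≤ (k : ℤ) * ((PP As).card : ℤ) := hfin
        _ ≤ (k : ℤ) * (d : ℤ) := mul_le_mul_of_nonneg_left hPPd (by positivity)
    rw [hWAs]
    exact_mod_cast hfinal
  · -- R nonempty: contradiction with hD
    exfalso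
    obtain ⟨i, hiR⟩ := hRne
    have hinotle : ¬ l i ≤ As := (Finset.mem_filter.mp hiR).2
    set E : Submodule ℂ V := As ⊓ l i with hE
    have hspread_i := hspread {i} ⟨i, Finset.mem_singleton_self i⟩
      (by intro j hj; rw [Finset.mem_singleton] at hj; subst hj; exact hinotle)
    rw [Finset.sup_singleton, Finset.card_singleton] at hspread_i
    have hmod_i : finrank ℂ ↥(As ⊔ l i) + finrank ℂ ↥E
        = finrank ℂ ↥As + finrank ℂ ↥(l i) := Submodule.finrank_sup_add_finrank_inf_eq As (l i)
    rw [hl i] at hmod_i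
    have hmul1 : k * 1 = k := by ring
    rw [hmul1] at hspread_i
    have hEk : finrank ℂ ↥E < k := by omega
    -- greedy on members inside As
    obtain ⟨C, w, hCsup, hCE, hwmem⟩ := greedy_avoid E l (PP As)
      (fun b _ => by rw [hl b]; exact hEk)
    have hCAs : C ≤ As :=
      hCsup.trans (Finset.sup_le fun b hb => (Finset.mem_filter.mp hb).2)
    -- Hall condition for Rado
    set B' : Submodule ℂ V := As ⊔ l i with hB'
    set T : Finset (Fin d) := R.erase i with hT
    have hall : ∀ T' ⊆ T, T'.Nonempty →
        finrank ℂ ↥B' + T'.card ≤ finrank ℂ ↥(B' ⊔ T'.sup l) := by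
      intro T' hT'T hT'ne
      by_contra hcon
      push_neg at hcon
      have hiT' : i ∉ T' := fun h => (Finset.mem_erase.mp (hT'T h)).1 rfl
      have hXout : ∀ j ∈ insert i T', ¬ l j ≤ As := by
        intro j hj
        rcases Finset.mem_insert.mp hj with rfl | hj'
        · exact hinotle
        · exact (Finset.mem_filter.mp (Finset.mem_of_mem_erase (hT'T hj'))).2
      have hsp2 := hspread (insert i T') ⟨i, Finset.mem_insert_self i T'⟩ hXout
      rw [Finset.card_insert_of_notMem hiT'] at hsp2
      have hsup2 : As ⊔ (insert i T').sup l = B' ⊔ T'.sup l := by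
        rw [Finset.sup_insert, hB', ← sup_assoc]
      rw [hsup2] at hsp2
      -- arithmetic contradiction
      have hc1 : 1 ≤ T'.card := Finset.card_pos.mpr hT'ne
      have hmulsucc : k * (T'.card + 1) = k * T'.card + k := by ring
      rw [hmulsucc] at hsp2
      have h3 : 2 * (T'.card - 1) ≤ k * (T'.card - 1) := Nat.mul_le_mul_right _ hk
      have h4 : k * T'.card = k * (T'.card - 1) + k := by
        rw [← Nat.mul_succ]
        congr 1
        omega
      omega
    obtain ⟨u, humem, huind⟩ := rado B' T l hall
    have hune : ∀ j ∈ T, u j ≠ 0 := by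
      intro j hj h0
      have hsum0 : (∑ t ∈ T, (if t = j then (1 : ℂ) else 0) • u t) ∈ B' := by
        have he : (∑ t ∈ T, (if t = j then (1 : ℂ) else 0) • u t) = u j := by
          rw [Finset.sum_eq_single j]
          · simp
          · intro t _ htj
            simp [htj]
          · intro hjT
            exact absurd hj hjT
        rw [he, h0]
        exact Submodule.zero_mem B'
      have := huind _ hsum0 j hj
      simp at this
    set S : Submodule ℂ V := C ⊔ span ℂ (u '' ↑T) with hS
    have hSW : S ≤ W := by
      apply sup_le (hCAs.trans hAsW)
      rw [Submodule.span_le]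
      rintro x ⟨j, hjT, rfl⟩
      exact hlW j (humem j hjT)
    have hSli : S ⊓ l i = ⊥ := by
      rw [eq_bot_iff]
      rintro x ⟨hxS, hxl⟩
      obtain ⟨cc, hcc, y, hy, rfl⟩ := Submodule.mem_sup.mp hxS
      rw [Finsupp.mem_span_image_iff_linearCombination] at hy
      obtain ⟨co, hco, hylc⟩ := hy
      have hcosupp : co.support ⊆ T := by
        have := (Finsupp.mem_supported ℂ co).mp hco
        exact_mod_cast this
      have hysum : y = ∑ j ∈ T, co j • u j := by
        rw [← hylc, Finsupp.linearCombination_apply, Finsupp.sum]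
        exact Finset.sum_subset hcosupp
          (fun t _ hnt => by rw [Finsupp.notMem_support_iff.mp hnt, zero_smul])
      have hyB : y ∈ B' := by
        have h1 : cc + y ∈ B' := by
          apply Submodule.mem_sup_right
          exact hxl
        have h2 : cc ∈ B' := Submodule.mem_sup_left (hCAs hcc)
        have : y = (cc + y) - cc := by abel
        rw [this]
        exact Submodule.sub_mem _ h1 h2
      have hco0 : ∀ t ∈ T, co t = 0 := by
        apply huind
        rw [← hysum]
        exact hyB
      have hy0 : y = 0 := by
        rw [hysum]
        exact Finset.sum_eq_zero fun t ht => by rw [hco0 t ht, zero_smul]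
      have hccE : cc ∈ C ⊓ E := by
        refine ⟨hcc, hCAs hcc, ?_⟩
        rwa [hy0, add_zero] at hxl
      rw [hCE] at hccE
      rw [hy0, add_zero]
      exact hccE
    have hSmeets : ∀ j, j ≠ i → l j ⊓ S ≠ ⊥ := by
      intro j hji
      by_cases hjA : l j ≤ As
      · have hjP : j ∈ PP As := by
          simp only [hPP, Finset.mem_filter]
          exact ⟨Finset.mem_univ j, hjA⟩
        obtain ⟨m1, m2, m3⟩ := hwmem j hjP
        rw [Submodule.ne_bot_iff]
        refine ⟨w j, ⟨m1, ?_⟩, m2⟩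
        exact (le_sup_left : C ≤ S) m3
      · have hjT : j ∈ T := by
          simp only [hT, Finset.mem_erase, hR, Finset.mem_filter]
          exact ⟨hji, Finset.mem_univ j, hjA⟩
        rw [Submodule.ne_bot_iff]
        refine ⟨u j, ⟨humem j hjT, ?_⟩, hune j hjT⟩
        refine (le_sup_right : span ℂ (u '' ↑T) ≤ S) ?_
        exact Submodule.subset_span ⟨j, hjT, rfl⟩
    exact hD i S hSW hSli hSmeets

end MainBound

/-- Let `2 ≤ k, d ≤ n` and suppose the `(k-1)`-planes `l₁,…,l_d ⊂ ℙⁿ` are in special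
position with respect to `(n-k)`-planes of `ℙⁿ`. Then the projective dimension of their
linear span is at most `⌊kd/2⌋ − 1`, i.e. the linear span in `ℂ^{n+1}` has
`finrank ≤ ⌊kd/2⌋`. -/
theorem special_position_span_bound
    (n k d : ℕ) (hk : 2 ≤ k) (hkn : k ≤ n) (hd : 2 ≤ d) (hdn : d ≤ n)
    (l : Fin d → Submodule ℂ (Fin (n + 1) → ℂ))
    (hl : ∀ i, finrank ℂ (l i) = k)
    (hsp : ∀ i, ∀ L : Submodule ℂ (Fin (n + 1) → ℂ), finrank ℂ L = n - k + 1 →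
      (∀ j, j ≠ i → l j ⊓ L ≠ ⊥) → l i ⊓ L ≠ ⊥) :
    finrank ℂ ↥(⨆ i, l i) ≤ k * d / 2 := by
  classical
  have hVrank : finrank ℂ (Fin (n + 1) → ℂ) = n + 1 := by simp
  have hD : ∀ i : Fin d, ∀ S : Submodule ℂ (Fin (n + 1) → ℂ), S ≤ (⨆ j, l j) → S ⊓ l i = ⊥ →
      (∀ j, j ≠ i → l j ⊓ S ≠ ⊥) → False := by
    intro i S hSW hSl hSm
    -- the span of `S` and `l i` has rank `finrank S + k ≤ n + 1`
    have hmod : finrank ℂ ↥(S ⊔ l i) + finrank ℂ ↥(S ⊓ l i)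
        = finrank ℂ ↥S + finrank ℂ ↥(l i) := Submodule.finrank_sup_add_finrank_inf_eq S (l i)
    rw [hSl, finrank_bot, hl i] at hmod
    have hle : finrank ℂ ↥(S ⊔ l i) ≤ n + 1 := by
      have := Submodule.finrank_le (S ⊔ l i)
      rwa [hVrank] at this
    -- extend `S` to a complement `L` of `l i` of rank `n + 1 - k`
    obtain ⟨Tc, hTc⟩ := Submodule.exists_isCompl (S ⊔ l i)
    set L : Submodule ℂ (Fin (n + 1) → ℂ) := S ⊔ Tc with hLdef
    have hdisj : (S ⊔ l i) ⊓ Tc = ⊥ := disjoint_iff.mp hTc.disjoint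
    have hSTc : S ⊓ Tc = ⊥ := by
      rw [eq_bot_iff]
      rintro x ⟨h1, h2⟩
      have hx : x ∈ (S ⊔ l i) ⊓ Tc := ⟨Submodule.mem_sup_left h1, h2⟩
      rw [hdisj] at hx
      exact hx
    have hLl : L ⊓ l i = ⊥ := by
      rw [eq_bot_iff]
      rintro x ⟨hxL, hxl⟩
      obtain ⟨s, hs, t, ht, rfl⟩ := Submodule.mem_sup.mp hxL
      have htm : t ∈ (S ⊔ l i) ⊓ Tc := by
        refine ⟨?_, ht⟩
        have h1 : s + t ∈ S ⊔ l i := Submodule.mem_sup_right hxl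
        have h2 : s ∈ S ⊔ l i := Submodule.mem_sup_left hs
        have : t = (s + t) - s := by abel
        rw [this]
        exact Submodule.sub_mem _ h1 h2
      rw [hdisj] at htm
      have ht0 : t = 0 := htm
      subst ht0
      have hsm : s ∈ S ⊓ l i := ⟨hs, by rwa [add_zero] at hxl⟩
      rw [hSl] at hsm
      rw [add_zero]
      exact hsm
    have hrkL : finrank ℂ ↥L = n - k + 1 := by
      have e1 : finrank ℂ ↥(S ⊔ l i) + finrank ℂ ↥Tc = n + 1 := by
        have := Submodule.finrank_add_eq_of_isCompl hTc
        rwa [hVrank] at this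
      have e2 : finrank ℂ ↥L + finrank ℂ ↥(S ⊓ Tc)
          = finrank ℂ ↥S + finrank ℂ ↥Tc := Submodule.finrank_sup_add_finrank_inf_eq S Tc
      rw [hSTc, finrank_bot] at e2
      omega
    have hmeets : ∀ j, j ≠ i → l j ⊓ L ≠ ⊥ := by
      intro j hji
      obtain ⟨x, hx, hx0⟩ := Submodule.exists_mem_ne_zero_of_ne_bot (hSm j hji)
      rw [Submodule.ne_bot_iff]
      exact ⟨x, ⟨hx.1, Submodule.mem_sup_left hx.2⟩, hx0⟩
    have := hsp i L hrkL hmeets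
    apply this
    rw [inf_comm]
    exact hLl
  have hcore := special_position_core hk l hl hD
  have h2 : 0 < 2 := by norm_num
  rw [Nat.le_div_iff_mul_le h2]
  omega

end SpecialPositionAux
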